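/- arXiv:2408.10036 — 9 statements merged into one kernel-verified Lean document; each statement's English description precedes it below -/
import Mathlib

section
/- Let m, n be positive integers with m ≥ n, let 𝔽 be ℝ or ℂ, and let X, Y be m×n matrices over 𝔽 with X ≠ 0. There exists a Hermitian m×m matrix A over 𝔽 with A X = Y if and only if null X ⊆ null Y and Xᴴ Y is Hermitian. -/
open Matrix

lemma stmt_8_alg {𝔽 : Type*} [RCLike 𝔽] {m n : ℕ}
    (X Y : Matrix (Fin m) (Fin n) 𝔽) (C P : Matrix (Fin m) (Fin m) 𝔽)
    (B : Matrix (Fin n) (Fin m) 𝔽)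
    (hPh : Pᴴ = P) (hPX : P * X = X) (hPB : P = X * B)
    (hCX : C * X = Y) (hsym : (Xᴴ * Y).IsHermitian) :
    ∃ A : Matrix (Fin m) (Fin m) 𝔽, A.IsHermitian ∧ A * X = Y := by
  have h1 : Xᴴ * C * X = Xᴴ * Y := by rw [Matrix.mul_assoc, hCX]
  have h2 : Xᴴ * Cᴴ * X = Xᴴ * Y := by
    calc Xᴴ * Cᴴ * X = (Xᴴ * C * X)ᴴ := by
          simp [conjTranspose_mul, Matrix.mul_assoc]
      _ = (Xᴴ * Y)ᴴ := by rw [h1]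
      _ = Xᴴ * Y := hsym
  have hPCP : P * Cᴴ * P = P * C * P := by
    have key : (X * B)ᴴ * Cᴴ * (X * B) = (X * B)ᴴ * C * (X * B) := by
      simp only [conjTranspose_mul, Matrix.mul_assoc]
      congr 1
      calc Xᴴ * (Cᴴ * (X * B)) = Xᴴ * Cᴴ * X * B := by
            simp only [Matrix.mul_assoc]
        _ = Xᴴ * C * X * B := by rw [h2, h1]
        _ = Xᴴ * (C * (X * B)) := by simp only [Matrix.mul_assoc]
    rw [← hPB, hPh] at key
    exact key
  refine ⟨C * P + P * Cᴴ - P * Cᴴ * P, ?_, ?_⟩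
  · unfold Matrix.IsHermitian
    simp only [conjTranspose_sub, conjTranspose_add, conjTranspose_mul,
      conjTranspose_conjTranspose, hPh]
    rw [← Matrix.mul_assoc, hPCP]
    abel
  · have hPCX : P * Cᴴ * P * X = P * Cᴴ * X := by rw [Matrix.mul_assoc, hPX]
    rw [Matrix.sub_mul, Matrix.add_mul, hPCX, Matrix.mul_assoc C P X, hPX, hCX]
    abel

/-- Hermitian targeting: there is a Hermitian `A` with `A X = Y` iff
`null X ⊆ null Y` and `Xᴴ Y` is Hermitian. -/
theorem stmt_8 {𝔽 : Type*} [RCLike 𝔽] (m n : ℕ) (hn : 0 < n) (hmn : n ≤ m)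
    (X Y : Matrix (Fin m) (Fin n) 𝔽) (hX : X ≠ 0) :
    (∃ A : Matrix (Fin m) (Fin m) 𝔽, A.IsHermitian ∧ A * X = Y) ↔
      ({u : Fin n → 𝔽 | X.mulVec u = 0} ⊆ {u | Y.mulVec u = 0} ∧
        (Xᴴ * Y).IsHermitian) := by
  constructor
  · rintro ⟨A, hA, rfl⟩
    constructor
    · intro u hu
      simp only [Set.mem_setOf_eq] at hu ⊢
      rw [← mulVec_mulVec, hu, mulVec_zero]
    · unfold Matrix.IsHermitian
      simp only [conjTranspose_mul, conjTranspose_conjTranspose, hA.eq]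
      simp [Matrix.mul_assoc]
  · rintro ⟨hker, hsym⟩
    classical
    -- Step 1: find `C` with `C * X = Y`.
    set fX : (Fin n → 𝔽) →ₗ[𝔽] (Fin m → 𝔽) := Matrix.toLin' X with hfX
    set fY : (Fin n → 𝔽) →ₗ[𝔽] (Fin m → 𝔽) := Matrix.toLin' Y with hfY
    have hk : LinearMap.ker fX ≤ LinearMap.ker fY := by
      intro u hu
      rw [LinearMap.mem_ker] at hu ⊢
      have : X.mulVec u = 0 := hu
      exact hker this
    obtain ⟨g, hg⟩ :=
      (((LinearMap.ker fX).liftQ fY hk).comp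
        fX.quotKerEquivRange.symm.toLinearMap).exists_extend
    have hgfX : ∀ u, g (fX u) = fY u := by
      intro u
      have hmem : fX u ∈ LinearMap.range fX := LinearMap.mem_range_self _ _
      have : g ((LinearMap.range fX).subtype ⟨fX u, hmem⟩) =
          ((LinearMap.ker fX).liftQ fY hk) (fX.quotKerEquivRange.symm ⟨fX u, hmem⟩) := by
        rw [← LinearMap.comp_apply, hg]; rfl
      simpa [LinearMap.quotKerEquivRange_symm_apply_image] using this
    set C : Matrix (Fin m) (Fin m) 𝔽 := LinearMap.toMatrix' g with hCdef
    have hCX : C * X = Y := by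
      apply Matrix.toLin'.injective
      rw [Matrix.toLin'_mul]
      refine LinearMap.ext fun u => ?_
      simp only [LinearMap.comp_apply, hCdef, Matrix.toLin'_toMatrix']
      exact hgfX u
    -- Step 2: the orthogonal projection onto the column space of `X`.
    set K : Submodule 𝔽 (EuclideanSpace 𝔽 (Fin m)) :=
      LinearMap.range (Matrix.toEuclideanLin X) with hKdef
    set p : EuclideanSpace 𝔽 (Fin m) →ₗ[𝔽] EuclideanSpace 𝔽 (Fin m) :=
      (K.subtypeL ∘L K.orthogonalProjectionOnto :
        EuclideanSpace 𝔽 (Fin m) →ₗ[𝔽] EuclideanSpace 𝔽 (Fin m)) with hpdef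
    set P : Matrix (Fin m) (Fin m) 𝔽 := Matrix.toEuclideanLin.symm p with hPdef
    have hPapp : Matrix.toEuclideanLin P = p := Matrix.toEuclideanLin.apply_symm_apply p
    have hmul : ∀ (A : Matrix (Fin m) (Fin m) 𝔽) (M : Matrix (Fin m) (Fin n) 𝔽)
        (v : EuclideanSpace 𝔽 (Fin n)),
        Matrix.toEuclideanLin (A * M) v = Matrix.toEuclideanLin A (Matrix.toEuclideanLin M v) := by
      intro A M v
      simp [Matrix.toEuclideanLin_apply, mulVec_mulVec]
    have hpfix : ∀ w ∈ K, p w = w := by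
      intro w hw
      simp only [hpdef, ContinuousLinearMap.coe_coe, ContinuousLinearMap.comp_apply,
        Submodule.subtypeL_apply]
      exact K.starProjection_eq_self_iff.mpr hw
    have hPh : Pᴴ = P := by
      have : P.IsHermitian := by
        rw [Matrix.isHermitian_iff_isSymmetric, hPapp]
        exact K.starProjection_isSymmetric
      exact this
    have hPX : P * X = X := by
      apply Matrix.toEuclideanLin.injective
      refine LinearMap.ext fun v => ?_
      rw [hmul P X v, hPapp]
      exact hpfix _ (LinearMap.mem_range_self _ v)
    -- Step 3: the columns of `P` lie in the column space of `X`.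
    have hcol : ∀ j : Fin m, ∃ w : EuclideanSpace 𝔽 (Fin n),
        Matrix.toEuclideanLin X w =
          Matrix.toEuclideanLin P ((WithLp.equiv 2 (Fin m → 𝔽)).symm (Pi.single j 1)) := by
      intro j
      rw [hPapp]
      have : p ((WithLp.equiv 2 (Fin m → 𝔽)).symm (Pi.single j 1)) ∈ K := by
        simp only [hpdef, ContinuousLinearMap.coe_coe, ContinuousLinearMap.comp_apply,
          Submodule.subtypeL_apply]
        exact Submodule.coe_mem _
      exact this
    choose w hw using hcol
    set B : Matrix (Fin n) (Fin m) 𝔽 :=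
      Matrix.of (fun k j => (WithLp.equiv 2 (Fin n → 𝔽)) (w j) k) with hBdef
    have hPB : P = X * B := by
      ext i j
      have h1 : (X * B) i j = (X.mulVec ((WithLp.equiv 2 (Fin n → 𝔽)) (w j))) i := by
        simp [hBdef, Matrix.mul_apply, Matrix.mulVec, dotProduct]
      have h2 : (X.mulVec ((WithLp.equiv 2 (Fin n → 𝔽)) (w j))) i =
          (WithLp.equiv 2 (Fin m → 𝔽)) (Matrix.toEuclideanLin X (w j)) i := by
        rfl
      have h3 : (WithLp.equiv 2 (Fin m → 𝔽))
          (Matrix.toEuclideanLin P ((WithLp.equiv 2 (Fin m → 𝔽)).symm (Pi.single j 1))) i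
          = (P.mulVec (Pi.single j 1)) i := by
        rw [WithLp.equiv_symm_apply, Matrix.toLpLin_toLp]
        simp
      have h4 : (P.mulVec (Pi.single j 1)) i = P i j := by
        simp [Matrix.mulVec_single]
      rw [h1, h2, hw j, h3, h4]
    exact stmt_8_alg X Y C P B hPh hPX hPB hCX hsym
end

section
/- Let m, n be positive integers with m ≥ n, let 𝔽 be ℝ or ℂ, and let X, Y be m×n matrices over 𝔽. Suppose 1 ≤ r ≤ n and Y = V Σ Wᴴ, where V (m×m) and W (n×n) are unitary, Σ is the m×n block matrix [[Σ_r, 0], [0, 0]] and Σ_r is an r×r diagonal real matrix with positive diagonal entries. Partition Z = Vᴴ X W conformally to Σ as Z = [[Z₁₁, Z₁₂], [Z₂₁, Z₂₂]] with Z₁₁ of size r×r. Then Xᴴ Y = Yᴴ X if and only if Z₁₂ = 0 and Σ_r Z₁₁ = Z₁₁ᴴ Σ_r. -/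
open Matrix

/-- With a singular value decomposition `Y = V Σ Wᴴ` (Σ = Σ_r ⊕ 0, Σ_r diagonal positive)
and `Z = Vᴴ X W` partitioned conformally, `Xᴴ Y = Yᴴ X` iff `Z₁₂ = 0` and
`Σ_r Z₁₁ = Z₁₁ᴴ Σ_r`.  Rows are indexed by `Fin r ⊕ Fin (m - r)` and columns by
`Fin r ⊕ Fin (n - r)`, realizing the block partition. -/
theorem stmt_10 {𝔽 : Type*} [RCLike 𝔽] (m n r : ℕ)
    (hr : 1 ≤ r) (hrn : r ≤ n) (hnm : n ≤ m)
    (X Y : Matrix (Fin r ⊕ Fin (m - r)) (Fin r ⊕ Fin (n - r)) 𝔽)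
    (V : Matrix (Fin r ⊕ Fin (m - r)) (Fin r ⊕ Fin (m - r)) 𝔽)
    (W : Matrix (Fin r ⊕ Fin (n - r)) (Fin r ⊕ Fin (n - r)) 𝔽)
    (hV : Vᴴ * V = 1) (hW : Wᴴ * W = 1)
    (D : Fin r → ℝ) (hD : ∀ i, 0 < D i)
    (hY : Y = V * (fromBlocks (diagonal fun i => ((D i : ℝ) : 𝔽)) 0 0 0 :
        Matrix (Fin r ⊕ Fin (m - r)) (Fin r ⊕ Fin (n - r)) 𝔽) * Wᴴ) :
    Xᴴ * Y = Yᴴ * X ↔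
      ((Vᴴ * X * W).toBlocks₁₂ = 0 ∧
        diagonal (fun i => ((D i : ℝ) : 𝔽)) * (Vᴴ * X * W).toBlocks₁₁ =
          ((Vᴴ * X * W).toBlocks₁₁)ᴴ * diagonal (fun i => ((D i : ℝ) : 𝔽))) := by
  set Dd : Matrix (Fin r) (Fin r) 𝔽 := diagonal (fun i => ((D i : ℝ) : 𝔽)) with hDd
  set Sm : Matrix (Fin r ⊕ Fin (m - r)) (Fin r ⊕ Fin (n - r)) 𝔽 :=
    fromBlocks Dd 0 0 0 with hSm
  set Z : Matrix (Fin r ⊕ Fin (m - r)) (Fin r ⊕ Fin (n - r)) 𝔽 := Vᴴ * X * W with hZ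
  have hV' : V * Vᴴ = 1 := mul_eq_one_comm.mp hV
  have hW' : W * Wᴴ = 1 := mul_eq_one_comm.mp hW
  have hX : V * Z * Wᴴ = X := by
    rw [hZ]
    simp only [Matrix.mul_assoc]
    rw [hW', Matrix.mul_one, ← Matrix.mul_assoc, hV', Matrix.one_mul]
  have hDdH : Ddᴴ = Dd := by
    ext i j
    rw [hDd, conjTranspose_apply]
    rcases eq_or_ne i j with rfl | hij
    · simp [RCLike.star_def, RCLike.conj_ofReal]
    · simp [diagonal_apply_ne _ hij, diagonal_apply_ne' _ hij]
  have key : Xᴴ * Y = Yᴴ * X ↔ Zᴴ * Sm = Smᴴ * Z := by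
    have h1 : Xᴴ * Y = W * (Zᴴ * Sm) * Wᴴ := by
      rw [← hX, hY]
      simp only [conjTranspose_mul, conjTranspose_conjTranspose, Matrix.mul_assoc]
      rw [← Matrix.mul_assoc Vᴴ V, hV, Matrix.one_mul]
    have h2 : Yᴴ * X = W * (Smᴴ * Z) * Wᴴ := by
      rw [← hX, hY]
      simp only [conjTranspose_mul, conjTranspose_conjTranspose, Matrix.mul_assoc]
      rw [← Matrix.mul_assoc Vᴴ V, hV, Matrix.one_mul]
    rw [h1, h2]
    constructor
    · intro h
      have h' := congrArg (fun M => Wᴴ * M * W) h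
      simp only [Matrix.mul_assoc] at h'
      simp only [hW, Matrix.mul_one] at h'
      rw [← Matrix.mul_assoc, hW, Matrix.one_mul] at h'
      rw [← Matrix.mul_assoc, hW, Matrix.one_mul] at h'
      exact h'
    · intro h; rw [h]
  rw [key]
  have hZb : Z = fromBlocks Z.toBlocks₁₁ Z.toBlocks₁₂ Z.toBlocks₂₁ Z.toBlocks₂₂ :=
    (fromBlocks_toBlocks Z).symm
  have hL : Zᴴ * Sm = fromBlocks (Z.toBlocks₁₁ᴴ * Dd) 0 (Z.toBlocks₁₂ᴴ * Dd) 0 := by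
    rw [hZb, hSm, fromBlocks_conjTranspose, fromBlocks_multiply]
    simp
  have hR : Smᴴ * Z = fromBlocks (Dd * Z.toBlocks₁₁) (Dd * Z.toBlocks₁₂) 0 0 := by
    rw [hZb, hSm, fromBlocks_conjTranspose, fromBlocks_multiply, hDdH]
    simp
  rw [hL, hR, fromBlocks_inj]
  have hDne : ∀ i, ((D i : ℝ) : 𝔽) ≠ 0 := fun i => by
    exact_mod_cast (hD i).ne'
  constructor
  · rintro ⟨h11, h12, -, -⟩
    have hz12 : Z.toBlocks₁₂ = 0 := by
      ext i j
      have := congrFun (congrFun h12.symm i) j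
      rw [diagonal_mul] at this
      simpa [hDne i] using this
    exact ⟨hz12, h11.symm⟩
  · rintro ⟨h12, h11⟩
    refine ⟨h11.symm, ?_, ?_, rfl⟩ <;> simp [h12]
end

section
/- Let m, n be positive integers with m ≥ n, let 𝔽 be ℝ or ℂ, and let X, Y be m×n matrices over 𝔽. Suppose 1 ≤ r ≤ n and Y = V Σ Wᴴ, where V (m×m) and W (n×n) are unitary, Σ is the m×n block matrix [[Σ_r, 0], [0, 0]] and Σ_r is an r×r diagonal real matrix with positive diagonal entries. Partition Z = Vᴴ X W conformally to Σ as Z = [[Z₁₁, Z₁₂], [Z₂₁, Z₂₂]] with Z₁₁ of size r×r, and let Z₁ be the m×r matrix formed by stacking Z₁₁ over Z₂₁. If Z₁₂ = 0, Σ_r Z₁₁ = Z₁₁ᴴ Σ_r, rank Z₁ = r, and (Z₂₁ · null Z₁₁) ∩ col Z₂₂ = {0}, then there exists a Hermitian m×m matrix A over 𝔽 with A X = Y. -/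
open Matrix

-- existence of a generalized inverse
lemma exists_ginv {𝔽 : Type*} [Field 𝔽] {ι κ : Type*} [Fintype ι] [Fintype κ]
    [DecidableEq ι] [DecidableEq κ] (Z : Matrix ι κ 𝔽) :
    ∃ P : Matrix κ ι 𝔽, Z * P * Z = Z := by
  set f : (κ → 𝔽) →ₗ[𝔽] (ι → 𝔽) := Matrix.toLin' Z with hf
  obtain ⟨q, hq⟩ := (LinearMap.range f).exists_isCompl
  obtain ⟨g', hg'⟩ := f.rangeRestrict.exists_rightInverse_of_surjective
    (LinearMap.range_rangeRestrict f ▸ rfl)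
  set π := (LinearMap.range f).linearProjOfIsCompl q hq
  refine ⟨LinearMap.toMatrix' (g' ∘ₗ π), ?_⟩
  apply Matrix.toLin'.injective
  rw [Matrix.toLin'_mul, Matrix.toLin'_mul, Matrix.toLin'_toMatrix']
  refine LinearMap.ext fun x => ?_
  have h1 : π (f x) = ⟨f x, LinearMap.mem_range_self f x⟩ :=
    Submodule.linearProjOfIsCompl_apply_left hq ⟨f x, LinearMap.mem_range_self f x⟩
  have h2 := congrArg Subtype.val (LinearMap.congr_fun hg' ⟨f x, LinearMap.mem_range_self f x⟩)
  simp only [← hf, LinearMap.coe_comp, Function.comp_apply, h1]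
  simpa [LinearMap.rangeRestrict] using h2

lemma mul_eq_of_ker {𝔽 : Type*} [Field 𝔽] {ι κ τ : Type*} [Fintype ι] [Fintype κ] [Fintype τ]
    (Z S : Matrix ι κ 𝔽) (hker : ∀ u, Z *ᵥ u = 0 → S *ᵥ u = 0)
    {C D : Matrix κ τ 𝔽} (h : Z * C = Z * D) : S * C = S * D := by
  ext i j
  have hcol : ∀ (M : Matrix ι κ 𝔽) (N : Matrix κ τ 𝔽) i,
      (M * N) i j = (M *ᵥ fun k => N k j) i := by
    intro M N i; simp [Matrix.mul_apply, Matrix.mulVec, dotProduct]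
  have hu : Z *ᵥ (fun k => C k j - D k j) = 0 := by
    have : (fun k => C k j - D k j) = (fun k => C k j) - fun k => D k j := rfl
    rw [this, Matrix.mulVec_sub, sub_eq_zero]
    ext i; rw [← hcol, ← hcol, h]
  have hs := hker _ hu
  have : (S *ᵥ ((fun k => C k j) - fun k => D k j)) i = 0 := congrFun hs i
  rw [Matrix.mulVec_sub] at this
  have := sub_eq_zero.mp this
  rw [hcol, hcol, this]

lemma key {𝔽 : Type*} [RCLike 𝔽] {ι κ : Type*} [Fintype ι] [Fintype κ]
    [DecidableEq ι] [DecidableEq κ] (Z S : Matrix ι κ 𝔽)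
    (hker : ∀ u, Z *ᵥ u = 0 → S *ᵥ u = 0) (hherm : (Zᴴ * S).IsHermitian) :
    ∃ B : Matrix ι ι 𝔽, B.IsHermitian ∧ B * Z = S := by
  obtain ⟨P, hP⟩ := exists_ginv Z
  have h1 : Sᴴ * Z = Zᴴ * S := by
    have := hherm.eq
    rwa [conjTranspose_mul, conjTranspose_conjTranspose] at this
  have h2 : ∀ Q : Matrix κ ι 𝔽, Sᴴ * (Z * Q) = Zᴴ * (S * Q) := fun Q => by
    rw [← Matrix.mul_assoc, ← Matrix.mul_assoc, h1]
  refine ⟨S * P + Pᴴ * Sᴴ - Pᴴ * Sᴴ * Z * P, ?_, ?_⟩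
  · unfold Matrix.IsHermitian
    simp only [conjTranspose_sub, conjTranspose_add, conjTranspose_mul,
      conjTranspose_conjTranspose, Matrix.mul_assoc, h2]
    abel
  · have hSPZ : S * (P * Z) = S * (1 : Matrix κ κ 𝔽) := by
      apply mul_eq_of_ker Z S hker
      rw [Matrix.mul_one, ← Matrix.mul_assoc, hP]
    rw [Matrix.mul_one] at hSPZ
    have hZPZ : Pᴴ * Sᴴ * Z * P * Z = Pᴴ * Sᴴ * Z := by
      rw [Matrix.mul_assoc (Pᴴ * Sᴴ * Z), Matrix.mul_assoc (Pᴴ * Sᴴ), ← Matrix.mul_assoc Z, hP]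
    rw [Matrix.sub_mul, Matrix.add_mul, hZPZ, Matrix.mul_assoc S, hSPZ]
    abel

lemma mulVec_eq_zero_of_rank {𝔽 : Type*} [RCLike 𝔽] {ι : Type*} [Fintype ι] {r : ℕ}
    (M : Matrix ι (Fin r) 𝔽) (hrank : M.rank = r) {u : Fin r → 𝔽}
    (hu : M *ᵥ u = 0) : u = 0 := by
  have hrn := M.mulVecLin.finrank_range_add_finrank_ker
  rw [show Module.finrank 𝔽 (LinearMap.range M.mulVecLin) = M.rank from rfl, hrank,
    Module.finrank_pi, Fintype.card_fin] at hrn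
  have hker : Module.finrank 𝔽 (LinearMap.ker M.mulVecLin) = 0 := by omega
  rw [Submodule.finrank_eq_zero] at hker
  have : u ∈ LinearMap.ker M.mulVecLin := by
    simpa [Matrix.mulVecLin_apply] using hu
  simpa [hker] using this

/-- With a singular value decomposition `Y = V Σ Wᴴ` (Σ = Σ_r ⊕ 0, Σ_r diagonal positive)
and `Z = Vᴴ X W` partitioned conformally: if `Z₁₂ = 0`, `Σ_r Z₁₁ = Z₁₁ᴴ Σ_r`,
`rank [Z₁₁; Z₂₁] = r`, and `(Z₂₁ · null Z₁₁) ∩ col Z₂₂ = {0}`, then there is a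
Hermitian `A` with `A X = Y`. -/
theorem stmt_11 {𝔽 : Type*} [RCLike 𝔽] (m n r : ℕ)
    (hr : 1 ≤ r) (hrn : r ≤ n) (hnm : n ≤ m)
    (X Y : Matrix (Fin r ⊕ Fin (m - r)) (Fin r ⊕ Fin (n - r)) 𝔽)
    (V : Matrix (Fin r ⊕ Fin (m - r)) (Fin r ⊕ Fin (m - r)) 𝔽)
    (W : Matrix (Fin r ⊕ Fin (n - r)) (Fin r ⊕ Fin (n - r)) 𝔽)
    (hV : Vᴴ * V = 1) (hW : Wᴴ * W = 1)
    (D : Fin r → ℝ) (hD : ∀ i, 0 < D i)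
    (hY : Y = V * (fromBlocks (diagonal fun i => ((D i : ℝ) : 𝔽)) 0 0 0 :
        Matrix (Fin r ⊕ Fin (m - r)) (Fin r ⊕ Fin (n - r)) 𝔽) * Wᴴ)
    (h12 : (Vᴴ * X * W).toBlocks₁₂ = 0)
    (h11 : diagonal (fun i => ((D i : ℝ) : 𝔽)) * (Vᴴ * X * W).toBlocks₁₁ =
      ((Vᴴ * X * W).toBlocks₁₁)ᴴ * diagonal (fun i => ((D i : ℝ) : 𝔽)))
    (hrank : (fromRows (Vᴴ * X * W).toBlocks₁₁ (Vᴴ * X * W).toBlocks₂₁).rank = r)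
    (hint : ((Vᴴ * X * W).toBlocks₂₁.mulVec ''
          {u : Fin r → 𝔽 | (Vᴴ * X * W).toBlocks₁₁.mulVec u = 0}) ∩
        Set.range (Vᴴ * X * W).toBlocks₂₂.mulVec = {0}) :
    ∃ A : Matrix (Fin r ⊕ Fin (m - r)) (Fin r ⊕ Fin (m - r)) 𝔽,
      A.IsHermitian ∧ A * X = Y := by
  set Z : Matrix (Fin r ⊕ Fin (m - r)) (Fin r ⊕ Fin (n - r)) 𝔽 := Vᴴ * X * W with hZ
  set d : Fin r → 𝔽 := fun i => ((D i : ℝ) : 𝔽) with hd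
  set S : Matrix (Fin r ⊕ Fin (m - r)) (Fin r ⊕ Fin (n - r)) 𝔽 :=
    fromBlocks (diagonal d) 0 0 0 with hS
  have hVV : V * Vᴴ = 1 := mul_eq_one_comm.mp hV
  have hWW : W * Wᴴ = 1 := mul_eq_one_comm.mp hW
  have hdstar : (diagonal d)ᴴ = diagonal d := by
    have hstar : star d = d := funext fun i => by
      simp [hd, RCLike.star_def, RCLike.conj_ofReal]
    rw [Matrix.diagonal_conjTranspose, hstar]
  have hblk : Z = fromBlocks Z.toBlocks₁₁ 0 Z.toBlocks₂₁ Z.toBlocks₂₂ := by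
    conv_lhs => rw [← Matrix.fromBlocks_toBlocks Z]
    rw [h12]
  -- kernel condition
  have hker : ∀ u, Z *ᵥ u = 0 → S *ᵥ u = 0 := by
    intro u hu
    have hu' := hu
    rw [hblk, Matrix.fromBlocks_mulVec] at hu'
    have h1 : Z.toBlocks₁₁ *ᵥ (u ∘ Sum.inl) = 0 := by
      have h' : Z.toBlocks₁₁ *ᵥ (u ∘ Sum.inl) + (0 : Matrix _ _ 𝔽) *ᵥ (u ∘ Sum.inr) = 0 := by
        funext i; exact congrFun hu' (Sum.inl i)
      simpa using h'
    have h2 : Z.toBlocks₂₁ *ᵥ (u ∘ Sum.inl) + Z.toBlocks₂₂ *ᵥ (u ∘ Sum.inr) = 0 := by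
      funext i; exact congrFun hu' (Sum.inr i)
    have hmem : Z.toBlocks₂₁ *ᵥ (u ∘ Sum.inl) ∈
        (Z.toBlocks₂₁.mulVec '' {v : Fin r → 𝔽 | Z.toBlocks₁₁.mulVec v = 0}) ∩
          Set.range Z.toBlocks₂₂.mulVec := by
      constructor
      · exact ⟨u ∘ Sum.inl, h1, rfl⟩
      · refine ⟨-(u ∘ Sum.inr), ?_⟩
        rw [Matrix.mulVec_neg]
        exact (eq_neg_of_add_eq_zero_left h2).symm
    have h21 : Z.toBlocks₂₁ *ᵥ (u ∘ Sum.inl) = 0 := by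
      have := hint ▸ hmem
      simpa using this
    have hfr : fromRows Z.toBlocks₁₁ Z.toBlocks₂₁ *ᵥ (u ∘ Sum.inl) = 0 := by
      rw [fromRows_mulVec, h1, h21]; simp
    have hu1 : u ∘ Sum.inl = 0 := mulVec_eq_zero_of_rank _ hrank hfr
    rw [hS, Matrix.fromBlocks_mulVec, hu1]
    simp
  -- hermitian condition
  have hherm : (Zᴴ * S).IsHermitian := by
    have hcalc : Zᴴ * S = fromBlocks (Z.toBlocks₁₁ᴴ * diagonal d) 0 0 0 := by
      rw [hblk, hS, Matrix.fromBlocks_conjTranspose, Matrix.fromBlocks_multiply]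
      simp
    unfold Matrix.IsHermitian
    rw [hcalc, Matrix.fromBlocks_conjTranspose]
    simp only [Matrix.conjTranspose_zero, Matrix.conjTranspose_mul,
      Matrix.conjTranspose_conjTranspose, hdstar]
    rw [h11]
  obtain ⟨B, hB, hBZ⟩ := key Z S hker hherm
  refine ⟨V * B * Vᴴ, ?_, ?_⟩
  · unfold Matrix.IsHermitian
    rw [Matrix.conjTranspose_mul, Matrix.conjTranspose_mul,
      Matrix.conjTranspose_conjTranspose, hB.eq, Matrix.mul_assoc]
  · have hX : X = V * Z * Wᴴ := by
      rw [hZ, ← Matrix.mul_assoc, ← Matrix.mul_assoc, hVV, Matrix.one_mul,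
        Matrix.mul_assoc, hWW, Matrix.mul_one]
    rw [hX, hY]
    calc V * B * Vᴴ * (V * Z * Wᴴ) = V * (B * ((Vᴴ * V) * Z)) * Wᴴ := by
          simp only [Matrix.mul_assoc]
      _ = V * S * Wᴴ := by rw [hV, Matrix.one_mul, hBZ]
end

section
/- Let m, n be positive integers with m ≥ n, let 𝔽 be ℝ or ℂ, and let X, Y be m×n matrices over 𝔽 with X ≠ 0. There exists a positive semidefinite m×m matrix A over 𝔽 with A X = Y if and only if Xᴴ Y is positive semidefinite and null Y = null (Xᴴ Y). -/
open Matrix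
open scoped ComplexOrder

/-- Positive semidefinite targeting: there is a positive semidefinite `A` with
`A X = Y` iff `Xᴴ Y` is positive semidefinite and `null Y = null (Xᴴ Y)`. -/
theorem stmt_12 {𝔽 : Type*} [RCLike 𝔽] (m n : ℕ) (hn : 0 < n) (hmn : n ≤ m)
    (X Y : Matrix (Fin m) (Fin n) 𝔽) (hX : X ≠ 0) :
    (∃ A : Matrix (Fin m) (Fin m) 𝔽, A.PosSemidef ∧ A * X = Y) ↔
      ((Xᴴ * Y).PosSemidef ∧
        {u : Fin n → 𝔽 | Y.mulVec u = 0} = {u | (Xᴴ * Y).mulVec u = 0}) := by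
  constructor
  · rintro ⟨A, hA, rfl⟩
    have hXAX : Xᴴ * (A * X) = Xᴴ * A * X := by rw [Matrix.mul_assoc]
    refine ⟨hXAX ▸ hA.conjTranspose_mul_mul_same X, ?_⟩
    ext u
    simp only [Set.mem_setOf_eq]
    constructor
    · intro h
      rw [← Matrix.mulVec_mulVec, h, Matrix.mulVec_zero]
    · intro h
      have h1 : star u ⬝ᵥ (Xᴴ * (A * X)) *ᵥ u = 0 := by rw [h, dotProduct_zero]
      have h2 : star (X *ᵥ u) ⬝ᵥ A *ᵥ (X *ᵥ u) = 0 := by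
        have hsu : star u ᵥ* Xᴴ = star (X *ᵥ u) := by
          rw [Matrix.vecMul_conjTranspose, star_star]
        rw [← hsu, ← Matrix.dotProduct_mulVec, Matrix.mulVec_mulVec, Matrix.mulVec_mulVec]
        rw [hXAX] at h1
        exact h1
      have h3 := (hA.dotProduct_mulVec_zero_iff (X *ᵥ u)).mp h2
      rw [← Matrix.mulVec_mulVec, h3]
  · rintro ⟨hM, hnull⟩
    set M := Xᴴ * Y with hMdef
    have hH : M.IsHermitian := hM.1
    set U : Matrix (Fin n) (Fin n) 𝔽 := (hH.eigenvectorUnitary : Matrix (Fin n) (Fin n) 𝔽)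
      with hUdef
    have hU1 : star U * U = 1 := Unitary.star_mul_self_of_mem (SetLike.coe_mem _)
    set D : Matrix (Fin n) (Fin n) 𝔽 := diagonal (RCLike.ofReal ∘ hH.eigenvalues) with hDdef
    set N : Matrix (Fin n) (Fin n) 𝔽 :=
      U * diagonal (RCLike.ofReal ∘ (fun x : ℝ => x⁻¹) ∘ hH.eigenvalues) * star U with hNdef
    have hdiagPSD :
        (diagonal (RCLike.ofReal ∘ (fun x : ℝ => x⁻¹) ∘ hH.eigenvalues) :
          Matrix (Fin n) (Fin n) 𝔽).PosSemidef := by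
      refine Matrix.posSemidef_diagonal_iff.mpr fun i => ?_
      simp only [Function.comp_apply]
      exact_mod_cast inv_nonneg.mpr (hM.eigenvalues_nonneg i)
    have hN : N.PosSemidef := by
      rw [hNdef, Matrix.star_eq_conjTranspose]
      exact hdiagPSD.mul_mul_conjTranspose_same U
    -- key computation : M * N * M = M
    have hspec : M = U * D * star U := hH.spectral_theorem
    have hdd : D * (diagonal (RCLike.ofReal ∘ (fun x : ℝ => x⁻¹) ∘ hH.eigenvalues) * D) = D := by
      rw [hDdef, Matrix.diagonal_mul_diagonal, Matrix.diagonal_mul_diagonal]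
      refine congrArg Matrix.diagonal (funext fun i => ?_)
      simp only [Function.comp_apply]
      rw [← RCLike.ofReal_mul, ← RCLike.ofReal_mul]
      congr 1
      rcases eq_or_ne (hH.eigenvalues i) 0 with h | h
      · simp [h]
      · rw [inv_mul_cancel₀ h, mul_one]
    have hdd' : D * (diagonal (RCLike.ofReal ∘ (fun x : ℝ => x⁻¹) ∘ hH.eigenvalues)
        * (D * star U)) = D * star U := by
      calc D * (diagonal (RCLike.ofReal ∘ (fun x : ℝ => x⁻¹) ∘ hH.eigenvalues) * (D * star U))
          = D * (diagonal (RCLike.ofReal ∘ (fun x : ℝ => x⁻¹) ∘ hH.eigenvalues) * D) * star U := by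
            simp only [Matrix.mul_assoc]
        _ = D * star U := by rw [hdd]
    have key : M * N * M = M := by
      rw [hspec, hNdef]
      simp only [Matrix.mul_assoc]
      rw [← Matrix.mul_assoc (star U) U, hU1, Matrix.one_mul,
        ← Matrix.mul_assoc (star U) U, hU1, Matrix.one_mul, hdd']
    have hMN : M * (N * M) = M := by rw [← Matrix.mul_assoc]; exact key
    -- Y * (N * M) = Y
    have hYP : Y * (N * M) = Y := by
      have h0 : ∀ u, Y *ᵥ ((1 - N * M) *ᵥ u) = 0 := by
        intro u
        have hMu : M *ᵥ ((1 - N * M) *ᵥ u) = 0 := by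
          rw [Matrix.mulVec_mulVec, Matrix.mul_sub, Matrix.mul_one, hMN, sub_self,
            Matrix.zero_mulVec]
        have : ((1 - N * M) *ᵥ u) ∈ {u : Fin n → 𝔽 | M *ᵥ u = 0} := hMu
        rw [← hnull] at this
        exact this
      have h1 : Y * (1 - N * M) = 0 := by
        ext i j
        have := congr_fun (h0 (Pi.single j 1)) i
        rw [Matrix.mulVec_mulVec, Matrix.mulVec_single] at this
        simpa using this
      rw [Matrix.mul_sub, Matrix.mul_one, sub_eq_zero] at h1
      exact h1.symm
    have hYX : Yᴴ * X = M := by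
      rw [← hH.eq, hMdef, Matrix.conjTranspose_mul, Matrix.conjTranspose_conjTranspose]
    refine ⟨Y * N * Yᴴ, hN.mul_mul_conjTranspose_same Y, ?_⟩
    rw [Matrix.mul_assoc (Y * N), hYX, Matrix.mul_assoc, hYP]
end

section
/- Let m, n be positive integers with m ≥ n, let 𝔽 be ℝ or ℂ, and let X, Y be m×n matrices over 𝔽 with X ≠ 0. There exists a positive definite m×m matrix A over 𝔽 with A X = Y if and only if Xᴴ Y is positive semidefinite, null Y = null (Xᴴ Y), and rank Y = rank X. -/
open Matrix
open scoped ComplexOrder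

lemma exists_psd_ginv {𝔽 : Type*} [RCLike 𝔽] {k : ℕ} (M : Matrix (Fin k) (Fin k) 𝔽)
    (hM : M.PosSemidef) :
    ∃ N : Matrix (Fin k) (Fin k) 𝔽, N.PosSemidef ∧ M * N * M = M ∧ N * M * N = N := by
  have hH := hM.isHermitian
  set V : Matrix (Fin k) (Fin k) 𝔽 := (hH.eigenvectorUnitary : Matrix (Fin k) (Fin k) 𝔽) with hV
  have hVV : Vᴴ * V = 1 := by
    rw [← Matrix.star_eq_conjTranspose]
    exact Matrix.mem_unitaryGroup_iff'.mp hH.eigenvectorUnitary.2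
  set d := hH.eigenvalues with hd
  set Dm : Matrix (Fin k) (Fin k) 𝔽 := diagonal (RCLike.ofReal ∘ d) with hDm
  set D' : Matrix (Fin k) (Fin k) 𝔽 :=
    diagonal (RCLike.ofReal ∘ fun i => (d i)⁻¹) with hD'
  have hspec : M = V * Dm * Vᴴ := by
    simpa [Matrix.star_eq_conjTranspose, ← hV, ← hd, ← hDm] using hH.spectral_theorem
  have hD'psd : D'.PosSemidef := by
    rw [hD']
    refine Matrix.posSemidef_diagonal_iff.mpr fun i => ?_
    simp only [Function.comp_apply]
    exact RCLike.ofReal_nonneg.mpr (inv_nonneg.mpr (hM.eigenvalues_nonneg i))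
  have hcan : ∀ X : Matrix (Fin k) (Fin k) 𝔽, Vᴴ * (V * X) = X := fun X => by
    rw [← Matrix.mul_assoc, hVV, Matrix.one_mul]
  have hDDD : Dm * D' * Dm = Dm := by
    rw [hDm, hD', diagonal_mul_diagonal, diagonal_mul_diagonal]
    refine congrArg Matrix.diagonal (funext fun i => ?_)
    simp only [Function.comp_apply]
    rw [← RCLike.ofReal_mul, ← RCLike.ofReal_mul]
    refine congrArg _ ?_
    rcases eq_or_ne (d i) 0 with h | h
    · simp [h]
    · field_simp
  have hD'D'D : D' * Dm * D' = D' := by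
    rw [hDm, hD', diagonal_mul_diagonal, diagonal_mul_diagonal]
    refine congrArg Matrix.diagonal (funext fun i => ?_)
    simp only [Function.comp_apply]
    rw [← RCLike.ofReal_mul, ← RCLike.ofReal_mul]
    refine congrArg _ ?_
    rcases eq_or_ne (d i) 0 with h | h
    · simp [h]
    · field_simp
  refine ⟨V * D' * Vᴴ, hD'psd.mul_mul_conjTranspose_same V, ?_, ?_⟩
  · rw [hspec]
    simp only [Matrix.mul_assoc, hcan]
    simp only [← Matrix.mul_assoc]
    rw [show V * Dm * D' * Dm = V * (Dm * D' * Dm) by simp only [Matrix.mul_assoc], hDDD]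
  · conv_lhs => rw [hspec]
    simp only [Matrix.mul_assoc, hcan]
    simp only [← Matrix.mul_assoc]
    rw [show V * D' * Dm * D' = V * (D' * Dm * D') by simp only [Matrix.mul_assoc], hD'D'D]

/-- Positive definite targeting: there is a positive definite `A` with `A X = Y` iff
`Xᴴ Y` is positive semidefinite, `null Y = null (Xᴴ Y)`, and `rank Y = rank X`. -/
theorem stmt_13 {𝔽 : Type*} [RCLike 𝔽] (m n : ℕ) (hn : 0 < n) (hmn : n ≤ m)
    (X Y : Matrix (Fin m) (Fin n) 𝔽) (hX : X ≠ 0) :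
    (∃ A : Matrix (Fin m) (Fin m) 𝔽, A.PosDef ∧ A * X = Y) ↔
      ((Xᴴ * Y).PosSemidef ∧
        {u : Fin n → 𝔽 | Y.mulVec u = 0} = {u | (Xᴴ * Y).mulVec u = 0} ∧
        Y.rank = X.rank) := by
  constructor
  · rintro ⟨A, hA, rfl⟩
    have hpsd : (Xᴴ * (A * X)).PosSemidef := by
      rw [← Matrix.mul_assoc]
      exact hA.posSemidef.conjTranspose_mul_mul_same X
    refine ⟨hpsd, ?_, ?_⟩
    · ext u
      simp only [Set.mem_setOf_eq]
      constructor
      · intro h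
        rw [← Matrix.mulVec_mulVec, h, Matrix.mulVec_zero]
      · intro h
        have hXu : X *ᵥ u = 0 := by
          by_contra h0
          have hpos := hA.dotProduct_mulVec_pos h0
          have : star (X *ᵥ u) ⬝ᵥ A *ᵥ (X *ᵥ u) = star u ⬝ᵥ (Xᴴ * (A * X)) *ᵥ u := by
            rw [Matrix.star_mulVec, ← Matrix.dotProduct_mulVec,
              Matrix.mulVec_mulVec, Matrix.mulVec_mulVec, ← Matrix.mul_assoc]
          rw [this, h, dotProduct_zero] at hpos
          exact lt_irrefl _ hpos
        rw [← Matrix.mulVec_mulVec, hXu, Matrix.mulVec_zero]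
    · exact Matrix.rank_mul_eq_right_of_isUnit_det A X (hA.det_pos.ne'.isUnit)
  · rintro ⟨hpsd, hker, hrank⟩
    set M := Xᴴ * Y with hM
    have hkerMY : ∀ v : Fin n → 𝔽, M *ᵥ v = 0 → Y *ᵥ v = 0 := fun v hv => by
      have h : v ∈ {u : Fin n → 𝔽 | (Xᴴ * Y) *ᵥ u = 0} := hv
      rw [← hker] at h; exact h
    have hMH : Yᴴ * X = M := by
      have h : (Xᴴ * Y)ᴴ = Xᴴ * Y := hpsd.isHermitian
      rw [conjTranspose_mul, conjTranspose_conjTranspose] at h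
      rw [hM]
      exact h
    have hXtoY : ∀ v, X *ᵥ v = 0 → Y *ᵥ v = 0 := fun v hv => by
      apply hkerMY
      rw [← hMH, ← Matrix.mulVec_mulVec, hv, Matrix.mulVec_zero]
    have hYtoX : ∀ v, Y *ᵥ v = 0 → X *ᵥ v = 0 := by
      have hle : LinearMap.ker X.mulVecLin ≤ LinearMap.ker Y.mulVecLin := fun v hv => by
        simp only [LinearMap.mem_ker, Matrix.mulVecLin_apply] at hv ⊢
        exact hXtoY v hv
      have h1 := LinearMap.finrank_range_add_finrank_ker X.mulVecLin
      have h2 := LinearMap.finrank_range_add_finrank_ker Y.mulVecLin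
      have hr : Module.finrank 𝔽 (LinearMap.range Y.mulVecLin)
          = Module.finrank 𝔽 (LinearMap.range X.mulVecLin) := hrank
      have heq : LinearMap.ker X.mulVecLin = LinearMap.ker Y.mulVecLin :=
        Submodule.eq_of_le_of_finrank_eq hle (by omega)
      intro v hv
      have h : v ∈ LinearMap.ker Y.mulVecLin := by
        simp only [LinearMap.mem_ker, Matrix.mulVecLin_apply]; exact hv
      rw [← heq] at h
      simpa using h
    obtain ⟨N, hN, hMNM, hNMN⟩ := exists_psd_ginv M hpsd
    obtain ⟨N', hN', hKNK, hNKN⟩ := exists_psd_ginv (Xᴴ * X) (Matrix.posSemidef_conjTranspose_mul_self X)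
    set P := X * N' * Xᴴ with hP
    have hPX : P * X = X := by
      have hXzero : X * (N' * (Xᴴ * X) - 1) = 0 := by
        refine Matrix.conjTranspose_mul_self_eq_zero.mp ?_
        calc (X * (N' * (Xᴴ * X) - 1))ᴴ * (X * (N' * (Xᴴ * X) - 1))
            = (N' * (Xᴴ * X) - 1)ᴴ * ((Xᴴ * X) * (N' * (Xᴴ * X) - 1)) := by
              rw [conjTranspose_mul]; simp only [Matrix.mul_assoc]
          _ = 0 := by
              rw [Matrix.mul_sub, Matrix.mul_one, ← Matrix.mul_assoc (Xᴴ * X) N' (Xᴴ * X),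
                hKNK, sub_self, Matrix.mul_zero]
      have hX1 : X * (N' * (Xᴴ * X)) = X := by
        rw [Matrix.mul_sub, Matrix.mul_one, sub_eq_zero] at hXzero
        exact hXzero
      calc P * X = X * (N' * (Xᴴ * X)) := by rw [hP]; simp only [Matrix.mul_assoc]
        _ = X := hX1
    have hYNM : Y * (N * M) = Y := by
      set B := N * M - 1 with hB
      have hMB : M * B = 0 := by
        rw [hB, Matrix.mul_sub, Matrix.mul_one, ← Matrix.mul_assoc, hMNM, sub_self]
      have hYB : Y * B = 0 := by
        ext i j
        have hcol : M *ᵥ (fun kk => B kk j) = 0 := by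
          ext i'
          have h := congrFun (congrFun hMB i') j
          simpa [Matrix.mul_apply, Matrix.mulVec, dotProduct] using h
        have hYcol : Y *ᵥ (fun kk => B kk j) = 0 := hkerMY _ hcol
        have h := congrFun hYcol i
        simpa [Matrix.mul_apply, Matrix.mulVec, dotProduct] using h
      calc Y * (N * M) = Y * B + Y := by rw [hB, Matrix.mul_sub, Matrix.mul_one, sub_add_cancel]
        _ = Y := by rw [hYB, zero_add]
    have hA1 : (Y * N * Yᴴ).PosSemidef := hN.mul_mul_conjTranspose_same Y
    have hPH : Pᴴ = P := by
      rw [hP]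
      simp only [conjTranspose_mul, conjTranspose_conjTranspose, hN'.isHermitian.eq,
        Matrix.mul_assoc]
    have hPP : P * P = P := by
      rw [hP]
      have h1 : X * N' * Xᴴ * (X * N' * Xᴴ) = X * (N' * (Xᴴ * X) * N') * Xᴴ := by
        simp only [Matrix.mul_assoc]
      rw [h1, hNKN]
    have h1P : (1 - P).PosSemidef := by
      have hsq : (1 - P)ᴴ * (1 - P) = 1 - P := by
        rw [conjTranspose_sub, conjTranspose_one, hPH, Matrix.sub_mul, Matrix.one_mul,
          Matrix.mul_sub, Matrix.mul_one, hPP, sub_self, sub_zero]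
      rw [← hsq]
      exact Matrix.posSemidef_conjTranspose_mul_self _
    have hAX : (Y * N * Yᴴ + (1 - P)) * X = Y := by
      rw [Matrix.add_mul, Matrix.sub_mul, Matrix.one_mul, hPX, sub_self, add_zero]
      calc Y * N * Yᴴ * X = Y * (N * M) := by rw [← hMH]; simp only [Matrix.mul_assoc]
        _ = Y := hYNM
    refine ⟨Y * N * Yᴴ + (1 - P), Matrix.PosDef.of_dotProduct_mulVec_pos (hA1.isHermitian.add h1P.isHermitian) fun x hx => ?_, hAX⟩
    have q1 := hA1.dotProduct_mulVec_nonneg x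
    have q2 := h1P.dotProduct_mulVec_nonneg x
    by_contra hcon
    have hle0 : star x ⬝ᵥ (Y * N * Yᴴ) *ᵥ x + star x ⬝ᵥ (1 - P) *ᵥ x = 0 := by
      by_contra hne
      refine hcon ?_
      rw [Matrix.add_mulVec, dotProduct_add]
      exact lt_of_le_of_ne (add_nonneg q1 q2) (Ne.symm hne)
    obtain ⟨ha1, ha2⟩ := (add_eq_zero_iff_of_nonneg q1 q2).mp hle0
    have hPx : (1 - P) *ᵥ x = 0 := (h1P.dotProduct_mulVec_zero_iff x).mp ha2
    have hxPx : x = P *ᵥ x := by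
      rw [Matrix.sub_mulVec, Matrix.one_mulVec, sub_eq_zero] at hPx
      exact hPx
    set c := (N' * Xᴴ) *ᵥ x with hc2
    have hxc : X *ᵥ c = x := by
      rw [hc2, Matrix.mulVec_mulVec, ← Matrix.mul_assoc, ← hP, ← hxPx]
    have hA1x : (Y * N * Yᴴ) *ᵥ x = 0 := (hA1.dotProduct_mulVec_zero_iff x).mp ha1
    have hkey : Xᴴ * (Y * N * Yᴴ) * X = M := by
      calc Xᴴ * (Y * N * Yᴴ) * X = M * N * (Yᴴ * X) := by
            rw [hM]; simp only [Matrix.mul_assoc]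
        _ = M * N * M := by rw [hMH]
        _ = M := hMNM
    have hMc : M *ᵥ c = 0 := by
      calc M *ᵥ c = (Xᴴ * (Y * N * Yᴴ) * X) *ᵥ c := by rw [hkey]
        _ = (Xᴴ * (Y * N * Yᴴ)) *ᵥ (X *ᵥ c) := by rw [← Matrix.mulVec_mulVec]
        _ = Xᴴ *ᵥ ((Y * N * Yᴴ) *ᵥ x) := by rw [hxc, ← Matrix.mulVec_mulVec]
        _ = 0 := by rw [hA1x, Matrix.mulVec_zero]
    have hYc : Y *ᵥ c = 0 := hkerMY c hMc
    have hXc : X *ᵥ c = 0 := hYtoX c hYc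
    exact hx (by rw [← hxc, hXc])
end

section
/- Let m, n be positive integers with m ≥ n, let 𝔽 be ℝ or ℂ, and let X, Y be m×n matrices over 𝔽 with rank X = n. There exists a positive definite m×m matrix A over 𝔽 with A X = Y if and only if Xᴴ Y is positive definite. -/
open Matrix
open scoped ComplexOrder

/-- Quadratic form of a conjugated matrix. -/
private lemma quad_eq {𝔽 : Type*} [RCLike 𝔽] {k l : ℕ} (A : Matrix (Fin k) (Fin k) 𝔽)
    (B : Matrix (Fin k) (Fin l) 𝔽) (x : Fin l → 𝔽) :
    star x ⬝ᵥ ((Bᴴ * A * B) *ᵥ x) = star (B *ᵥ x) ⬝ᵥ (A *ᵥ (B *ᵥ x)) := by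
  simp only [star_mulVec, dotProduct_mulVec, vecMul_vecMul]

/-- Full column rank implies `mulVec` kills only zero. -/
private lemma mulVec_eq_zero {𝔽 : Type*} [RCLike 𝔽] {m n : ℕ}
    (X : Matrix (Fin m) (Fin n) 𝔽) (hX : X.rank = n) {v : Fin n → 𝔽}
    (hv : X *ᵥ v = 0) : v = 0 := by
  have h := LinearMap.finrank_range_add_finrank_ker X.mulVecLin
  rw [Matrix.rank] at hX
  rw [hX] at h
  have hdim : Module.finrank 𝔽 (Fin n → 𝔽) = n := by simp
  rw [hdim] at h
  have hker : LinearMap.ker X.mulVecLin = ⊥ := by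
    apply Submodule.finrank_eq_zero.mp
    omega
  have : v ∈ LinearMap.ker X.mulVecLin := by
    simp [LinearMap.mem_ker, Matrix.mulVecLin_apply, hv]
  rw [hker] at this
  simpa using this

private lemma posDef_conj {𝔽 : Type*} [RCLike 𝔽] {m n : ℕ}
    {A : Matrix (Fin m) (Fin m) 𝔽} (hA : A.PosDef) {X : Matrix (Fin m) (Fin n) 𝔽}
    (hX : X.rank = n) : (Xᴴ * A * X).PosDef := by
  refine PosDef.of_dotProduct_mulVec_pos (isHermitian_conjTranspose_mul_mul X hA.1) (fun v hv => ?_)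
  rw [quad_eq]
  exact hA.dotProduct_mulVec_pos (fun h => hv (mulVec_eq_zero X hX h))

/-- If `X` has full column rank, there is a positive definite `A` with `A X = Y` iff
`Xᴴ Y` is positive definite. -/
theorem stmt_14 {𝔽 : Type*} [RCLike 𝔽] (m n : ℕ) (hn : 0 < n) (hmn : n ≤ m)
    (X Y : Matrix (Fin m) (Fin n) 𝔽) (hX : X.rank = n) :
    (∃ A : Matrix (Fin m) (Fin m) 𝔽, A.PosDef ∧ A * X = Y) ↔ (Xᴴ * Y).PosDef := by
  constructor
  · rintro ⟨A, hA, rfl⟩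
    rw [← Matrix.mul_assoc]
    exact posDef_conj hA hX
  · intro hT
    -- notation
    set S : Matrix (Fin n) (Fin n) 𝔽 := Xᴴ * X with hS_def
    set T : Matrix (Fin n) (Fin n) 𝔽 := Xᴴ * Y with hT_def
    have hS : S.PosDef := by
      refine PosDef.of_dotProduct_mulVec_pos (isHermitian_conjTranspose_mul_self X) (fun v hv => ?_)
      have := quad_eq (1 : Matrix (Fin m) (Fin m) 𝔽) X v
      rw [Matrix.mul_one] at this
      have h1 : star v ⬝ᵥ (S *ᵥ v) = star (X *ᵥ v) ⬝ᵥ (X *ᵥ v) := by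
        rw [hS_def, this, Matrix.one_mulVec]
      rw [h1]
      have hXv : X *ᵥ v ≠ 0 := fun h => hv (mulVec_eq_zero X hX h)
      exact
        (dotProduct_star_self_pos_iff (R := 𝔽)).mpr hXv
    -- invertibility
    have hSdet : IsUnit S.det := hS.isUnit.map (MonoidHom.id _) |>.map detMonoidHom
    have hTdet : IsUnit T.det := hT.isUnit.map (MonoidHom.id _) |>.map detMonoidHom
    have hSinv : S⁻¹ * S = 1 := Matrix.nonsing_inv_mul S hSdet
    have hSinv' : S * S⁻¹ = 1 := Matrix.mul_nonsing_inv S hSdet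
    have hTinv : T⁻¹ * T = 1 := Matrix.nonsing_inv_mul T hTdet
    have hSinvH : S⁻¹ᴴ = S⁻¹ := by
      rw [Matrix.conjTranspose_nonsing_inv, hS.isHermitian.eq]
    have hYX : Yᴴ * X = T := by
      calc Yᴴ * X = (Xᴴ * Y)ᴴ := by rw [conjTranspose_mul, conjTranspose_conjTranspose]
        _ = Tᴴ := by rw [← hT_def]
        _ = T := hT.isHermitian.eq
    set P : Matrix (Fin m) (Fin m) 𝔽 := X * S⁻¹ * Xᴴ with hP_def
    have hPH : Pᴴ = P := by
      simp only [hP_def, conjTranspose_mul, conjTranspose_conjTranspose, hSinvH,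
        Matrix.mul_assoc]
    have hP2 : P * P = P := by
      rw [hP_def]
      calc X * S⁻¹ * Xᴴ * (X * S⁻¹ * Xᴴ)
          = X * S⁻¹ * (Xᴴ * X) * S⁻¹ * Xᴴ := by simp only [Matrix.mul_assoc]
        _ = X * S⁻¹ * S * S⁻¹ * Xᴴ := by rw [← hS_def]
        _ = X * (S⁻¹ * S) * S⁻¹ * Xᴴ := by simp only [Matrix.mul_assoc]
        _ = X * S⁻¹ * Xᴴ := by rw [hSinv, Matrix.mul_one]
    have hQ : (1 - P)ᴴ * (1 - P) = 1 - P := by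
      rw [conjTranspose_sub, conjTranspose_one, hPH, Matrix.sub_mul, Matrix.mul_sub,
        Matrix.mul_sub, Matrix.one_mul, Matrix.one_mul, Matrix.mul_one, hP2]
      abel
    have hQsemi : (1 - P).PosSemidef := by
      rw [← hQ]; exact posSemidef_conjTranspose_mul_self _
    set M : Matrix (Fin m) (Fin m) 𝔽 := Yᴴᴴ * T⁻¹ * Yᴴ with hM_def
    have hMsemi : M.PosSemidef := (hT.inv).posSemidef.conjTranspose_mul_mul_same Yᴴ
    refine ⟨M + (1 - P), ?_, ?_⟩
    · refine PosDef.of_dotProduct_mulVec_pos (hMsemi.1.add hQsemi.1) (fun u hu => ?_)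
      have hsplit : star u ⬝ᵥ ((M + (1 - P)) *ᵥ u)
          = star u ⬝ᵥ (M *ᵥ u) + star u ⬝ᵥ ((1 - P) *ᵥ u) := by
        rw [Matrix.add_mulVec, dotProduct_add]
      rw [hsplit]
      by_cases hYu : Yᴴ *ᵥ u = 0
      · -- second term is positive
        have hq2ne : (1 - P) *ᵥ u ≠ 0 := by
          intro h
          -- then u = P *ᵥ u
          have hu' : u = P *ᵥ u := by
            have := sub_eq_zero.mp (by simpa [Matrix.sub_mulVec, Matrix.one_mulVec] using h)
            exact this
          set w : Fin n → 𝔽 := S⁻¹ *ᵥ (Xᴴ *ᵥ u) with hw_def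
          have huw : u = X *ᵥ w := by
            rw [hw_def, Matrix.mulVec_mulVec, Matrix.mulVec_mulVec]
            simpa [hP_def, Matrix.mul_assoc] using hu'
          have hTw : T *ᵥ w = 0 := by
            have : Yᴴ *ᵥ (X *ᵥ w) = 0 := by rw [← huw]; exact hYu
            rwa [Matrix.mulVec_mulVec, hYX] at this
          have hw0 : w = 0 := by
            by_contra hw0
            have := hT.dotProduct_mulVec_pos hw0
            rw [hTw, dotProduct_zero] at this
            exact lt_irrefl _ this
          exact hu (by rw [huw, hw0, Matrix.mulVec_zero])
        have hq2pos : 0 < star u ⬝ᵥ ((1 - P) *ᵥ u) := by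
          rcases lt_or_eq_of_le (hQsemi.dotProduct_mulVec_nonneg u) with h | h
          · exact h
          · exact absurd ((hQsemi.dotProduct_mulVec_zero_iff u).mp h.symm) hq2ne
        have hq1 : 0 ≤ star u ⬝ᵥ (M *ᵥ u) := hMsemi.dotProduct_mulVec_nonneg u
        exact add_pos_of_nonneg_of_pos hq1 hq2pos
      · -- first term is positive
        have hq1pos : 0 < star u ⬝ᵥ (M *ᵥ u) := by
          rw [hM_def, quad_eq]
          exact (hT.inv).dotProduct_mulVec_pos hYu
        exact add_pos_of_pos_of_nonneg hq1pos (hQsemi.dotProduct_mulVec_nonneg u)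
    · -- (M + (1 - P)) * X = Y
      have h1 : M * X = Y := by
        rw [hM_def, conjTranspose_conjTranspose, Matrix.mul_assoc, hYX,
          Matrix.mul_assoc, hTinv, Matrix.mul_one]
      have h2 : P * X = X := by
        rw [hP_def, Matrix.mul_assoc, ← hS_def, Matrix.mul_assoc, hSinv, Matrix.mul_one]
      rw [Matrix.add_mul, h1, Matrix.sub_mul, Matrix.one_mul, h2]
      abel
end

section
/- Let m, n be positive integers with m ≥ n, let 𝔽 be ℝ or ℂ, and let X, Y be m×n matrices over 𝔽 with rank Y ≥ 1. There exists a reflection m×m matrix A over 𝔽 (i.e., A is Hermitian and A² = I) with A X = Y if and only if Xᴴ Y is Hermitian and Xᴴ X = Yᴴ Y. -/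
open Matrix

/-- Reflection targeting: there is a reflection `A` (Hermitian with `A² = I`) with
`A X = Y` iff `Xᴴ Y` is Hermitian and `Xᴴ X = Yᴴ Y`. -/
theorem stmt_16 {𝔽 : Type*} [RCLike 𝔽] (m n : ℕ) (hn : 0 < n) (hmn : n ≤ m)
    (X Y : Matrix (Fin m) (Fin n) 𝔽) (hY : 1 ≤ Y.rank) :
    (∃ A : Matrix (Fin m) (Fin m) 𝔽, A.IsHermitian ∧ A * A = 1 ∧ A * X = Y) ↔
      ((Xᴴ * Y).IsHermitian ∧ Xᴴ * X = Yᴴ * Y) := by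
  constructor
  · rintro ⟨A, hA, hA2, rfl⟩
    constructor
    · unfold Matrix.IsHermitian
      rw [conjTranspose_mul, conjTranspose_mul, conjTranspose_conjTranspose, hA.eq,
        ← Matrix.mul_assoc]
    · rw [conjTranspose_mul, hA.eq, Matrix.mul_assoc Xᴴ, ← Matrix.mul_assoc A, hA2,
        Matrix.one_mul]
  · rintro ⟨hH, hXX⟩
    have hYX : Yᴴ * X = Xᴴ * Y := by
      have := hH.eq
      rwa [conjTranspose_mul, conjTranspose_conjTranspose] at this
    have hDS : (X - Y)ᴴ * (X + Y) = 0 := by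
      rw [conjTranspose_sub, Matrix.sub_mul, Matrix.mul_add, Matrix.mul_add, hXX, hYX]
      abel
    set D := X - Y with hD
    let W : Submodule 𝔽 (EuclideanSpace 𝔽 (Fin m)) := LinearMap.range (Matrix.toEuclideanLin D)
    let P : EuclideanSpace 𝔽 (Fin m) →ₗ[𝔽] EuclideanSpace 𝔽 (Fin m) :=
      (W.subtypeL ∘L W.orthogonalProjectionOnto : _ →L[𝔽] _)
    have hPsymm : P.IsSymmetric := W.starProjection_isSymmetric
    have hPmem : ∀ x, P x ∈ W := fun x => Submodule.coe_mem _
    have hPW : ∀ x, x ∈ W → P x = x := fun x hx => Submodule.starProjection_eq_self_iff.mpr hx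
    have hPP : ∀ x, P (P x) = P x := fun x => hPW _ (hPmem x)
    have hPD : ∀ v, P (Matrix.toEuclideanLin D v) = Matrix.toEuclideanLin D v :=
      fun v => hPW _ ⟨v, rfl⟩
    have hPS : ∀ v, P (Matrix.toEuclideanLin (X + Y) v) = 0 := by
      intro v
      have hmem : Matrix.toEuclideanLin (X + Y) v ∈ Wᗮ := by
        rw [Submodule.mem_orthogonal]
        rintro u ⟨w, rfl⟩
        rw [Matrix.toEuclideanLin_apply, Matrix.toEuclideanLin_apply,
          EuclideanSpace.inner_toLp_toLp, dotProduct_comm, Matrix.star_mulVec,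
          dotProduct_mulVec, Matrix.vecMul_vecMul, hDS]
        simp
      have h0 := Submodule.orthogonalProjectionOnto_apply_of_mem_orthogonal hmem
      show W.subtypeL (W.orthogonalProjectionOnto _) = 0
      rw [h0]; simp
    let f : EuclideanSpace 𝔽 (Fin m) →ₗ[𝔽] EuclideanSpace 𝔽 (Fin m) :=
      LinearMap.id - (2 : 𝔽) • P
    refine ⟨Matrix.toEuclideanLin.symm f, ?_, ?_, ?_⟩
    · rw [Matrix.isHermitian_iff_isSymmetric, LinearEquiv.apply_symm_apply]
      intro x y
      simp only [f, LinearMap.sub_apply, LinearMap.smul_apply, LinearMap.id_apply,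
        inner_sub_left, inner_sub_right, inner_smul_left, inner_smul_right, hPsymm x y,
        RCLike.conj_ofNat]
    · apply Matrix.toEuclideanLin.injective
      rw [Matrix.toEuclideanLin_eq_toLin, Matrix.toLin_mul _ (PiLp.basisFun 2 𝔽 (Fin m)) _,
        ← Matrix.toEuclideanLin_eq_toLin, LinearEquiv.apply_symm_apply]
      refine LinearMap.ext fun x => ?_
      simp only [f, LinearMap.coe_comp, Function.comp_apply, LinearMap.sub_apply,
        LinearMap.smul_apply, LinearMap.id_apply, map_sub, LinearMap.map_smul, hPP]
      rw [Matrix.toEuclideanLin_eq_toLin, Matrix.toLin_one]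
      simp only [Module.End.one_apply, LinearMap.id_apply]
      module
    · apply Matrix.toEuclideanLin.injective
      rw [Matrix.toEuclideanLin_eq_toLin, Matrix.toLin_mul _ (PiLp.basisFun 2 𝔽 (Fin m)) _,
        ← Matrix.toEuclideanLin_eq_toLin, ← Matrix.toEuclideanLin_eq_toLin,
        LinearEquiv.apply_symm_apply]
      refine LinearMap.ext fun v => ?_
      have key : (2 : 𝔽) • P (Matrix.toEuclideanLin X v) = Matrix.toEuclideanLin D v := by
        have h2 : (2 : 𝔽) • Matrix.toEuclideanLin X v
            = Matrix.toEuclideanLin (X + Y) v + Matrix.toEuclideanLin D v := by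
          rw [← LinearMap.add_apply, ← map_add, hD]
          have hxy : X + Y + (X - Y) = (2 : 𝔽) • X := by
            rw [two_smul]; abel
          rw [hxy, LinearEquiv.map_smul, LinearMap.smul_apply]
        rw [← LinearMap.map_smul, h2, map_add, hPS, hPD, zero_add]
      simp only [LinearMap.coe_comp, Function.comp_apply, f, LinearMap.sub_apply,
        LinearMap.smul_apply, LinearMap.id_apply]
      rw [key, hD, map_sub]
      simp
end

section
/- Let m, n be positive integers with m ≥ n, let 𝔽 be ℝ or ℂ, and let X, Y be m×n matrices over 𝔽 with Y ≠ 0. There exists an orthogonal projection m×m matrix A over 𝔽 (i.e., A is Hermitian and A² = A) with A X = Y if and only if Yᴴ X = Yᴴ Y. -/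
open Matrix

lemma toEuclideanLin_mul' {𝔽 : Type*} [RCLike 𝔽] {p q r : ℕ}
    (A : Matrix (Fin p) (Fin q) 𝔽) (B : Matrix (Fin q) (Fin r) 𝔽) :
    Matrix.toEuclideanLin (A * B) =
      Matrix.toEuclideanLin A ∘ₗ Matrix.toEuclideanLin B := by
  simp only [Matrix.toEuclideanLin_eq_toLin]
  rw [Matrix.toLin_mul _ (PiLp.basisFun 2 𝔽 (Fin q))]


/-- Orthogonal projection targeting: there is an orthogonal projection `A`
(Hermitian with `A² = A`) with `A X = Y` iff `Yᴴ X = Yᴴ Y`. -/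
theorem stmt_17 {𝔽 : Type*} [RCLike 𝔽] (m n : ℕ) (hn : 0 < n) (hmn : n ≤ m)
    (X Y : Matrix (Fin m) (Fin n) 𝔽) (hY : Y ≠ 0) :
    (∃ A : Matrix (Fin m) (Fin m) 𝔽, A.IsHermitian ∧ A * A = A ∧ A * X = Y) ↔
      Yᴴ * X = Yᴴ * Y := by
  constructor
  · rintro ⟨A, hH, hP, rfl⟩
    rw [conjTranspose_mul, hH.eq, Matrix.mul_assoc, Matrix.mul_assoc,
      ← Matrix.mul_assoc A A X, hP]
  · intro h
    set T := Matrix.toEuclideanLin Y with hT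
    set U : Submodule 𝔽 (EuclideanSpace 𝔽 (Fin m)) := LinearMap.range T with hU
    set P : EuclideanSpace 𝔽 (Fin m) →ₗ[𝔽] EuclideanSpace 𝔽 (Fin m) :=
      ((U.subtypeL ∘L U.orthogonalProjectionOnto : EuclideanSpace 𝔽 (Fin m) →L[𝔽] EuclideanSpace 𝔽 (Fin m)) : EuclideanSpace 𝔽 (Fin m) →ₗ[𝔽] EuclideanSpace 𝔽 (Fin m)) with hPdef
    refine ⟨Matrix.toEuclideanLin.symm P, ?_, ?_, ?_⟩
    · rw [Matrix.isHermitian_iff_isSymmetric, LinearEquiv.apply_symm_apply]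
      exact U.starProjection_isSymmetric
    · apply Matrix.toEuclideanLin.injective
      rw [toEuclideanLin_mul', LinearEquiv.apply_symm_apply]
      refine LinearMap.ext fun x => ?_
      simp only [hPdef, LinearMap.comp_apply, ContinuousLinearMap.coe_coe,
        ContinuousLinearMap.comp_apply, Submodule.subtypeL_apply]
      exact congrArg Subtype.val
        (Submodule.orthogonalProjectionOnto_mem_subspace_eq_self (U.orthogonalProjectionOnto x))
    · apply Matrix.toEuclideanLin.injective
      rw [toEuclideanLin_mul', LinearEquiv.apply_symm_apply]
      refine LinearMap.ext fun x => ?_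
      have hx : (Matrix.toEuclideanLin X) x = T x + (Matrix.toEuclideanLin (X - Y)) x := by
        simp [hT, map_sub]
      have hmem : T x ∈ U := ⟨x, rfl⟩
      have hperp : (Matrix.toEuclideanLin (X - Y)) x ∈ Uᗮ := by
        rw [Submodule.mem_orthogonal]
        rintro u ⟨w, rfl⟩
        have : (inner 𝔽 (T w) ((Matrix.toEuclideanLin (X - Y)) x) : 𝔽) =
            inner 𝔽 w ((Matrix.toEuclideanLin (Yᴴ * (X - Y))) x) := by
          rw [toEuclideanLin_mul', LinearMap.comp_apply, hT,
            Matrix.toEuclideanLin_conjTranspose_eq_adjoint,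
            LinearMap.adjoint_inner_right]
        rw [this]
        have h0 : Yᴴ * (X - Y) = 0 := by
          rw [Matrix.mul_sub, h, sub_self]
        simp [h0]
      rw [LinearMap.comp_apply, hx]
      simp only [hPdef, ContinuousLinearMap.coe_coe, ContinuousLinearMap.comp_apply,
        Submodule.subtypeL_apply, map_add]
      rw [show ((U.orthogonalProjectionOnto (T x) : EuclideanSpace 𝔽 (Fin m))) = T x from
          (Submodule.starProjection_eq_self_iff (K := U)).2 hmem,
        Submodule.orthogonalProjectionOnto_apply_of_mem_orthogonal hperp]
      simp [hT]
end

section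
/- Let m, n be positive integers with m ≥ n, and let X, Y be m×n complex matrices with X ≠ 0. There exists a complex symmetric m×m matrix A (i.e., Aᵀ = A) with A X = Y if and only if null X ⊆ null Y and Xᵀ Y is symmetric (i.e., (Xᵀ Y)ᵀ = Xᵀ Y). -/
open Matrix

/-- Every linear map between vector spaces has a generalized inverse. -/
lemma exists_ginv_lin {K V W : Type*} [Field K] [AddCommGroup V] [Module K V]
    [AddCommGroup W] [Module K W] (f : V →ₗ[K] W) :
    ∃ g : W →ₗ[K] V, f ∘ₗ g ∘ₗ f = f := by
  obtain ⟨q, hq⟩ := Submodule.exists_isCompl (LinearMap.range f)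
  obtain ⟨s, hs⟩ := f.rangeRestrict.exists_rightInverse_of_surjective
    (LinearMap.range_rangeRestrict f)
  refine ⟨s ∘ₗ (LinearMap.range f).linearProjOfIsCompl q hq, ?_⟩
  ext x
  have h1 : ((LinearMap.range f).linearProjOfIsCompl q hq) (f x)
      = ⟨f x, LinearMap.mem_range_self f x⟩ :=
    Submodule.linearProjOfIsCompl_apply_left hq ⟨f x, LinearMap.mem_range_self f x⟩
  have h2 : f.rangeRestrict (s ⟨f x, LinearMap.mem_range_self f x⟩)
      = ⟨f x, LinearMap.mem_range_self f x⟩ := by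
    have := congrArg (fun t => t ⟨f x, LinearMap.mem_range_self f x⟩) hs
    simpa only [LinearMap.comp_apply, LinearMap.id_apply] using this
  have h3 : f (s ⟨f x, LinearMap.mem_range_self f x⟩) = f x := congrArg Subtype.val h2
  simp [h1, h3]

/-- Every complex matrix has a generalized inverse. -/
lemma exists_ginv_s18 {m n : ℕ} (X : Matrix (Fin m) (Fin n) ℂ) :
    ∃ G : Matrix (Fin n) (Fin m) ℂ, X * G * X = X := by
  obtain ⟨g, hg⟩ := exists_ginv_lin (Matrix.toLin' X)
  refine ⟨LinearMap.toMatrix' g, ?_⟩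
  apply Matrix.toLin'.injective
  rw [Matrix.toLin'_mul, Matrix.toLin'_mul, Matrix.toLin'_toMatrix', LinearMap.comp_assoc]
  exact hg

/-- Complex symmetric targeting: there is a complex symmetric `A` (`Aᵀ = A`) with
`A X = Y` iff `null X ⊆ null Y` and `Xᵀ Y` is symmetric. -/
theorem stmt_18 (m n : ℕ) (hn : 0 < n) (hmn : n ≤ m)
    (X Y : Matrix (Fin m) (Fin n) ℂ) (hX : X ≠ 0) :
    (∃ A : Matrix (Fin m) (Fin m) ℂ, Aᵀ = A ∧ A * X = Y) ↔
      ({u : Fin n → ℂ | X.mulVec u = 0} ⊆ {u | Y.mulVec u = 0} ∧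
        (Xᵀ * Y)ᵀ = Xᵀ * Y) := by
  constructor
  · rintro ⟨A, hA, hAX⟩
    constructor
    · intro u hu
      simp only [Set.mem_setOf_eq] at hu ⊢
      rw [← hAX, ← Matrix.mulVec_mulVec, hu, Matrix.mulVec_zero]
    · rw [← hAX, Matrix.transpose_mul, Matrix.transpose_mul, Matrix.transpose_transpose,
        hA, Matrix.mul_assoc]
  · rintro ⟨hnull, hsym⟩
    obtain ⟨G, hG⟩ := exists_ginv_s18 X
    have hG' : X * (G * X) = X := by rw [← Matrix.mul_assoc]; exact hG
    set A₀ : Matrix (Fin m) (Fin m) ℂ := Y * G with hA₀def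
    -- A₀ X = Y
    have hA₀ : A₀ * X = Y := by
      have h1 : ∀ u, (A₀ * X).mulVec u = Y.mulVec u := by
        intro u
        have hx : X.mulVec ((G * X).mulVec u - u) = 0 := by
          rw [Matrix.mulVec_sub, Matrix.mulVec_mulVec, ← Matrix.mul_assoc, hG, sub_self]
        have hy := hnull hx
        simp only [Set.mem_setOf_eq, Matrix.mulVec_sub, Matrix.mulVec_mulVec,
          sub_eq_zero] at hy
        calc (A₀ * X).mulVec u = (Y * (G * X)).mulVec u := by
              rw [hA₀def, Matrix.mul_assoc]
          _ = Y.mulVec u := hy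
      apply Matrix.toLin'.injective
      exact LinearMap.ext fun u => by simpa [Matrix.toLin'_apply] using h1 u
    -- key symmetry fact
    have hkey : Xᵀ * A₀ᵀ * X = Xᵀ * A₀ * X := by
      have h1 : Xᵀ * A₀ᵀ * X = Yᵀ * X := by
        rw [← Matrix.transpose_mul A₀ X, hA₀]
      have h2 : Xᵀ * A₀ * X = Xᵀ * Y := by rw [Matrix.mul_assoc, hA₀]
      rw [h1, h2, ← hsym, Matrix.transpose_mul, Matrix.transpose_transpose]
    set M : Matrix (Fin m) (Fin m) ℂ := (A₀ - A₀ᵀ) * X * G with hMdef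
    refine ⟨(1/2 : ℂ) • (A₀ + A₀ᵀ + (M + Mᵀ)), ?_, ?_⟩
    · simp only [Matrix.transpose_smul, Matrix.transpose_add, Matrix.transpose_transpose]
      congr 1
      abel
    · have hMX : M * X = (A₀ - A₀ᵀ) * X := by
        rw [hMdef, Matrix.mul_assoc, Matrix.mul_assoc, hG']
      have hMT : Mᵀ = Gᵀ * (Xᵀ * (A₀ᵀ - A₀)) := by
        simp only [hMdef, Matrix.transpose_mul, Matrix.transpose_sub,
          Matrix.transpose_transpose, Matrix.mul_assoc]
      have hMTX : Mᵀ * X = 0 := by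
        rw [hMT, Matrix.mul_assoc, Matrix.mul_assoc, Matrix.sub_mul, Matrix.mul_sub,
          ← Matrix.mul_assoc Xᵀ A₀ᵀ X, ← Matrix.mul_assoc Xᵀ A₀ X, hkey, sub_self,
          Matrix.mul_zero]
      rw [Matrix.smul_mul, Matrix.add_mul, Matrix.add_mul, Matrix.add_mul, hMX, hMTX,
        Matrix.sub_mul]
      simp only [hA₀]
      rw [show Y + A₀ᵀ * X + (Y - A₀ᵀ * X + 0) = (2 : ℂ) • Y by rw [two_smul]; abel,
        smul_smul]
      norm_num
end
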